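/- Let S be a polynomial CPDS over ℝ^d and κ ∈ ℝ[x_1,…,x_d]. Suppose that for each j in a finite index set J there are p_j ∈ ℝ[x_1,…,x_d] and w_j ∈ ℝ admitting sum-of-squares certificates as in the single-template SOS conditions (identities (1), (2), (3) of the SOS hierarchy) for S and κ. Then the reachable set R(S) is contained in the intersection V := ⋂_{j∈J} {x ∈ ℝ^d | p_j(x) ≤ w_j}, and every x ∈ V satisfies κ(x) ≤ min_{j∈J} w_j; in particular, if J is nonempty, {p_j | j ∈ J} is a well-representative template basis certifying the sublevel property of κ. -/

import Mathlib

open MvPolynomial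

section

variable {d : ℕ} {ι : Type*}

lemma eval_isSumSq_nonneg {p : MvPolynomial (Fin d) ℝ} (h : IsSumSq p)
    (x : Fin d → ℝ) : 0 ≤ eval x p := by
  induction h with
  | zero => simp
  | sq_add a _ ih => simpa using add_nonneg (mul_self_nonneg (eval x a)) ih

def Reach (Xin X0 : Set (Fin d → ℝ)) (X : ι → Set (Fin d → ℝ))
    (T : ι → (Fin d → ℝ) → (Fin d → ℝ)) : Set (Fin d → ℝ) :=
  ⋂₀ {C | Xin ⊆ C ∧ ∀ i : ι, T i '' (C ∩ X i ∩ X0) ⊆ C}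

def SOSCert (nin n0 : ℕ) (ni : ι → ℕ)
    (rin : Fin nin → MvPolynomial (Fin d) ℝ)
    (r0 : Fin n0 → MvPolynomial (Fin d) ℝ)
    (ri : (i : ι) → Fin (ni i) → MvPolynomial (Fin d) ℝ)
    (Tp : ι → Fin d → MvPolynomial (Fin d) ℝ)
    (κ : MvPolynomial (Fin d) ℝ)
    (p : MvPolynomial (Fin d) ℝ) (w : ℝ) : Prop :=
  ∃ (σ0 : MvPolynomial (Fin d) ℝ) (σ : Fin nin → MvPolynomial (Fin d) ℝ)
    (ψ : MvPolynomial (Fin d) ℝ) (σi : ι → MvPolynomial (Fin d) ℝ)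
    (μ : (i : ι) → Fin (ni i) → MvPolynomial (Fin d) ℝ)
    (γ : ι → Fin n0 → MvPolynomial (Fin d) ℝ),
    IsSumSq σ0 ∧ (∀ j, IsSumSq (σ j)) ∧ IsSumSq ψ ∧ (∀ i, IsSumSq (σi i)) ∧
    (∀ i j, IsSumSq (μ i j)) ∧ (∀ i j, IsSumSq (γ i j)) ∧
    (C w - p + ∑ j : Fin nin, σ j * rin j = σ0) ∧
    (∀ i : ι, -(bind₁ (Tp i) p) + p + (∑ j : Fin (ni i), μ i j * ri i j)
      + (∑ j : Fin n0, γ i j * r0 j) = σi i) ∧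
    (-κ + p = ψ)

/-- If for every `j` in a finite index set `J` the pair `(pⱼ, wⱼ)` admits single-template
SOS certificates for the polynomial CPDS `S` and `κ`, then the reachable set of `S` is
contained in `V = ⋂ⱼ {x | pⱼ(x) ≤ wⱼ}`, and every `x ∈ V` satisfies `κ(x) ≤ wⱼ` for
each `j`; in particular, if `J` is nonempty, `κ(x) ≤ min_{j ∈ J} wⱼ` on `V`. -/
theorem sos_family_invariant (d : ℕ) (ι : Type*) [Fintype ι]
    (J : Type*) [Fintype J]
    (nin n0 : ℕ) (ni : ι → ℕ)
    (rin : Fin nin → MvPolynomial (Fin d) ℝ)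
    (r0 : Fin n0 → MvPolynomial (Fin d) ℝ)
    (ri : (i : ι) → Fin (ni i) → MvPolynomial (Fin d) ℝ)
    (Tp : ι → Fin d → MvPolynomial (Fin d) ℝ)
    (Xin X0 : Set (Fin d → ℝ)) (X : ι → Set (Fin d → ℝ))
    (hXin : Xin ⊆ {x | ∀ j : Fin nin, eval x (rin j) ≤ 0})
    (hX0 : X0 ⊆ {x | ∀ j : Fin n0, eval x (r0 j) ≤ 0})
    (hXi : ∀ i : ι, X i ⊆ {x | ∀ j : Fin (ni i), eval x (ri i j) ≤ 0})
    (κ : MvPolynomial (Fin d) ℝ)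
    (p : J → MvPolynomial (Fin d) ℝ) (w : J → ℝ)
    (hcert : ∀ j : J, SOSCert nin n0 ni rin r0 ri Tp κ (p j) (w j)) :
    Reach Xin X0 X (fun i x => fun l : Fin d => eval x (Tp i l)) ⊆
      (⋂ j : J, {x : Fin d → ℝ | eval x (p j) ≤ w j}) ∧
    (∀ x ∈ ⋂ j : J, {x : Fin d → ℝ | eval x (p j) ≤ w j},
      ∀ j : J, eval x κ ≤ w j) ∧
    ∀ hJ : (Finset.univ : Finset J).Nonempty,
      ∀ x ∈ ⋂ j : J, {x : Fin d → ℝ | eval x (p j) ≤ w j},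
        eval x κ ≤ Finset.univ.inf' hJ w := by
  -- κ ≤ p j pointwise
  have hκp : ∀ j : J, ∀ x : Fin d → ℝ, eval x κ ≤ eval x (p j) := by
    intro j x
    obtain ⟨σ0, σ, ψ, σi, μ, γ, hσ0, hσ, hψ, hσi, hμ, hγ, h1, h2, h3⟩ := hcert j
    have := eval_isSumSq_nonneg hψ x
    rw [← h3] at this
    simp only [map_add, map_neg] at this
    linarith
  have hinv : ∀ j : J,
      Reach Xin X0 X (fun i x => fun l : Fin d => eval x (Tp i l)) ⊆
        {x : Fin d → ℝ | eval x (p j) ≤ w j} := by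
    intro j
    obtain ⟨σ0, σ, ψ, σi, μ, γ, hσ0, hσ, hψ, hσi, hμ, hγ, h1, h2, h3⟩ := hcert j
    apply Set.sInter_subset_of_mem
    constructor
    · intro x hx
      have hs := eval_isSumSq_nonneg hσ0 x
      rw [← h1] at hs
      simp only [map_add, map_sub, eval_C, map_sum, map_mul] at hs
      have hsum : ∑ k : Fin nin, eval x (σ k) * eval x (rin k) ≤ 0 := by
        apply Finset.sum_nonpos
        intro k _
        exact mul_nonpos_of_nonneg_of_nonpos (eval_isSumSq_nonneg (hσ k) x) (hXin hx k)
      simp only [Set.mem_setOf_eq]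
      linarith
    · intro i y hy
      obtain ⟨x, ⟨⟨hxC, hxXi⟩, hxX0⟩, rfl⟩ := hy
      have hs := eval_isSumSq_nonneg (hσi i) x
      rw [← h2 i] at hs
      simp only [map_add, map_neg, map_sum, map_mul] at hs
      have hb : eval x ((bind₁ (Tp i)) (p j))
          = eval (fun l : Fin d => eval x (Tp i l)) (p j) := by
        have h1 : eval x ((bind₁ (Tp i)) (p j)) = aeval x ((bind₁ (Tp i)) (p j)) := rfl
        have h2' : ∀ q : MvPolynomial (Fin d) ℝ,
            eval (fun l : Fin d => eval x (Tp i l)) q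
              = aeval (fun l : Fin d => aeval x (Tp i l)) q := fun q => rfl
        rw [h1, h2', aeval_bind₁]
      have hsum1 : ∑ k : Fin (ni i), eval x (μ i k) * eval x (ri i k) ≤ 0 :=
        Finset.sum_nonpos fun k _ =>
          mul_nonpos_of_nonneg_of_nonpos (eval_isSumSq_nonneg (hμ i k) x) (hXi i hxXi k)
      have hsum2 : ∑ k : Fin n0, eval x (γ i k) * eval x (r0 k) ≤ 0 :=
        Finset.sum_nonpos fun k _ =>
          mul_nonpos_of_nonneg_of_nonpos (eval_isSumSq_nonneg (hγ i k) x) (hX0 hxX0 k)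
      simp only [Set.mem_setOf_eq] at hxC ⊢
      rw [hb] at hs
      linarith
  refine ⟨?_, ?_, ?_⟩
  · intro x hx
    exact Set.mem_iInter.mpr fun j => hinv j hx
  · intro x hx j
    exact le_trans (hκp j x) (Set.mem_iInter.mp hx j)
  · intro hJ x hx
    apply Finset.le_inf'
    intro j _
    exact le_trans (hκp j x) (Set.mem_iInter.mp hx j)

end
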